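/- Let H_{m⃗}(x) = H_{m_1,…,m_k}(x) be a generalized harmonic polylogarithm with m_i ∈ ℝ∖(0,1] for all i, and let H_{b⃗}(x) = H_{b_1,…,b_l}(x) be one with b_i ∈ ℝ∖((−1,0)∪(0,1)) for all i and b_l ≠ 0. Then H_{m⃗}(1) and ∫_0^1 (H_{m⃗}(x) − H_{m⃗}(1))/(1−x) dx and H_{0,b_1,…,b_l}(1) are finite, and for every positive integer n: (i) ∫_0^1 (x^n − 1) H_{m⃗}(x)/(1−x) dx = ∫_0^1 x^n (H_{m⃗}(x) − H_{m⃗}(1))/(1−x) dx − ∫_0^1 (H_{m⃗}(x) − H_{m⃗}(1))/(1−x) dx − S_1(n)·H_{m⃗}(1), where S_1(n) = Σ_{i=1}^n 1/i; and (ii) ∫_0^1 (x^n − 1) H_{b⃗}(1−x)/(1−x) dx = ∫_0^1 x^n H_{b⃗}(1−x)/(1−x) dx − H_{0,b_1,…,b_l}(1). -/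

import Mathlib

open scoped Classical
open MeasureTheory intervalIntegral Filter

/-- The weight-one integrand: `f_0(x) = 1/x` and `f_a(x) = 1/(|a| − sign(a)·x)` for `a ≠ 0`. -/
noncomputable def GHf (a x : ℝ) : ℝ :=
  if a = 0 then 1 / x else 1 / (|a| - Real.sign a * x)

/-- The generalized harmonic polylogarithm `H_{m₁,…,m_w}(x)`: `1` for the empty word,
`(log x)^w / w!` for the all-zero word (note `Real.log` of a negative number equals the
log of its absolute value), and otherwise the oriented iterated integral
`∫_0^x f_{m₁}(y) H_{m₂,…,m_w}(y) dy`. -/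
noncomputable def GH : List ℝ → ℝ → ℝ
  | [], _ => 1
  | m :: p, x =>
    if m = 0 ∧ ∀ y ∈ p, y = (0:ℝ) then
      Real.log x ^ (p.length + 1) / ((p.length + 1).factorial : ℝ)
    else ∫ y in (0:ℝ)..x, GHf m y * GH p y

/-- `GHDef m⃗ x` states that the generalized harmonic polylogarithm `H_{m⃗}(x)` is
defined, i.e. all occurring iterated integrals converge. -/
def GHDef : List ℝ → ℝ → Prop
  | [], _ => True
  | m :: p, x =>
    (m = 0 ∧ ∀ y ∈ p, y = (0:ℝ)) ∨
    ((∀ y ∈ Set.uIoc (0:ℝ) x, GHDef p y) ∧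
      IntervalIntegrable (fun y => GHf m y * GH p y) MeasureTheory.volume 0 x)

open Set
open scoped Topology

lemma GH_cons_eq {m : ℝ} {p : List ℝ} (h : ¬ (m = 0 ∧ ∀ y ∈ p, y = (0:ℝ))) (x : ℝ) :
    GH (m :: p) x = ∫ y in (0:ℝ)..x, GHf m y * GH p y := by
  simp only [GH]; rw [if_neg h]

lemma GH_cons_eq' {m : ℝ} {p : List ℝ} (h : m = 0 ∧ ∀ y ∈ p, y = (0:ℝ)) (x : ℝ) :
    GH (m :: p) x = Real.log x ^ (p.length + 1) / ((p.length + 1).factorial : ℝ) := by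
  simp only [GH]; rw [if_pos h]

lemma GHf_of_pos {a : ℝ} (ha : 0 < a) (x : ℝ) : GHf a x = 1 / (a - x) := by
  rw [GHf, if_neg (ne_of_gt ha), abs_of_pos ha, Real.sign_of_pos ha, one_mul]

lemma GHf_of_neg {a : ℝ} (ha : a < 0) (x : ℝ) : GHf a x = 1 / (-a + x) := by
  rw [GHf, if_neg (ne_of_lt ha), abs_of_neg ha, Real.sign_of_neg ha, neg_one_mul, sub_neg_eq_add]

lemma GHf_zero (x : ℝ) : GHf 0 x = 1 / x := by rw [GHf, if_pos rfl]

lemma le_div_self' {A t : ℝ} (hA : 0 ≤ A) (ht : 0 < t) (ht1 : t ≤ 1) : A ≤ A / t := by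
  rw [le_div_iff₀ ht]; nlinarith

/-- constant bound for ms letters, m ≠ 0 -/
lemma GHf_ms_bound {m : ℝ} (hm : m < 0 ∨ 1 < m) :
    ∃ A, 1 ≤ A ∧ ∀ t ∈ Ioc (0:ℝ) 1, |GHf m t| ≤ A := by
  rcases hm with hm | hm
  · refine ⟨max 1 (1 / (-m)), le_max_left _ _, fun t ht => ?_⟩
    rw [GHf_of_neg hm]
    have hd : 0 < -m + t := by linarith [ht.1]
    rw [abs_of_pos (div_pos one_pos hd)]
    refine le_trans ?_ (le_max_right _ _)
    exact div_le_div_of_nonneg_left one_pos.le (by linarith) (by linarith [ht.1])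
  · refine ⟨max 1 (1 / (m - 1)), le_max_left _ _, fun t ht => ?_⟩
    rw [GHf_of_pos (by linarith)]
    have hd : 0 < m - t := by linarith [ht.2]
    rw [abs_of_pos (div_pos one_pos hd)]
    refine le_trans ?_ (le_max_right _ _)
    exact div_le_div_of_nonneg_left one_pos.le (by linarith) (by linarith [ht.2])

lemma GHf_ms_cont {m : ℝ} (hm : m ≤ 0 ∨ 1 < m) : ContinuousOn (GHf m) (Ioc 0 1) := by
  rcases hm with hm | hm
  · rcases eq_or_lt_of_le hm with rfl | hm
    · have : ∀ x ∈ Ioc (0:ℝ) 1, GHf 0 x = 1 / x := fun x _ => GHf_zero x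
      rw [continuousOn_congr this]
      exact continuousOn_const.div continuousOn_id (fun x hx => ne_of_gt hx.1)
    · have : ∀ x ∈ Ioc (0:ℝ) 1, GHf m x = 1 / (-m + x) := fun x _ => GHf_of_neg hm x
      rw [continuousOn_congr this]
      exact continuousOn_const.div (continuousOn_const.add continuousOn_id)
        (fun x hx => by dsimp; linarith [hx.1])
  · have : ∀ x ∈ Ioc (0:ℝ) 1, GHf m x = 1 / (m - x) := fun x _ => GHf_of_pos (by linarith) x
    rw [continuousOn_congr this]
    exact continuousOn_const.div (continuousOn_const.sub continuousOn_id)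
      (fun x hx => by dsimp; linarith [hx.2])

/-- On (0, 1/2] every bs letter gives |f_b| ≤ 1/t. -/
lemma GHf_bs_bound1 {b : ℝ} (hb : b = 0 ∨ 1 ≤ |b|) :
    ∀ t ∈ Ioc (0:ℝ) (2⁻¹:ℝ), |GHf b t| ≤ 1 / t := by
  intro t ht
  have ht2 : (2:ℝ) ≤ 1 / t := by
    rw [le_div_iff₀ ht.1]; linarith [ht.2]
  rcases hb with rfl | hb
  · rw [GHf_zero, abs_of_pos (div_pos one_pos ht.1)]
  · rcases le_or_gt 0 b with hb0 | hb0
    · have hb1 : 1 ≤ b := by rwa [abs_of_nonneg hb0] at hb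
      rw [GHf_of_pos (by linarith)]
      have hd : 0 < b - t := by linarith [ht.2]
      rw [abs_of_pos (div_pos one_pos hd)]
      refine le_trans ?_ ht2
      rw [div_le_iff₀ hd]; linarith [ht.2]
    · have hb1 : b ≤ -1 := by rcases abs_cases b with ⟨he,_⟩|⟨he,_⟩ <;> linarith [he ▸ hb]
      rw [GHf_of_neg hb0]
      have hd : 0 < -b + t := by linarith [ht.1]
      rw [abs_of_pos (div_pos one_pos hd)]
      refine le_trans ?_ ht2
      rw [div_le_iff₀ hd]; linarith [ht.1]

/-- On (0, 1/2], nonzero bs letters give |f_b| ≤ 2. -/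
lemma GHf_bs_bound1' {b : ℝ} (hb : 1 ≤ |b|) :
    ∀ t ∈ Ioc (0:ℝ) (2⁻¹:ℝ), |GHf b t| ≤ 2 := by
  intro t ht
  rcases le_or_gt 0 b with hb0 | hb0
  · have hb1 : 1 ≤ b := by rwa [abs_of_nonneg hb0] at hb
    rw [GHf_of_pos (by linarith)]
    have hd : 0 < b - t := by linarith [ht.2]
    rw [abs_of_pos (div_pos one_pos hd), div_le_iff₀ hd]; linarith [ht.2]
  · have hb1 : b ≤ -1 := by rcases abs_cases b with ⟨he,_⟩|⟨he,_⟩ <;> linarith [he ▸ hb]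
    rw [GHf_of_neg hb0]
    have hd : 0 < -b + t := by linarith [ht.1]
    rw [abs_of_pos (div_pos one_pos hd), div_le_iff₀ hd]; linarith [ht.1]

/-- On [1/2, 1) every bs letter gives |f_b| ≤ 2/(1-t). -/
lemma GHf_bs_bound2 {b : ℝ} (hb : b = 0 ∨ 1 ≤ |b|) :
    ∀ t ∈ Ico (2⁻¹:ℝ) 1, |GHf b t| ≤ 2 / (1 - t) := by
  intro t ht
  have h1t : 0 < 1 - t := by linarith [ht.2]
  have h2 : (2:ℝ) ≤ 2 / (1 - t) := by
    rw [le_div_iff₀ h1t]; linarith [ht.1]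
  rcases hb with rfl | hb
  · rw [GHf_zero, abs_of_pos (div_pos one_pos (by linarith [ht.1] : (0:ℝ) < t))]
    refine le_trans ?_ h2
    rw [div_le_iff₀ (by linarith [ht.1] : (0:ℝ) < t)]; linarith [ht.1]
  · rcases le_or_gt 0 b with hb0 | hb0
    · have hb1 : 1 ≤ b := by rwa [abs_of_nonneg hb0] at hb
      rw [GHf_of_pos (by linarith)]
      have hd : 0 < b - t := by linarith [ht.2]
      rw [abs_of_pos (div_pos one_pos hd)]
      exact div_le_div₀ (by norm_num) (by norm_num) h1t (by linarith)
    · have hb1 : b ≤ -1 := by rcases abs_cases b with ⟨he,_⟩|⟨he,_⟩ <;> linarith [he ▸ hb]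
      rw [GHf_of_neg hb0]
      have hd : 0 < -b + t := by linarith [ht.1]
      rw [abs_of_pos (div_pos one_pos hd)]
      refine le_trans ?_ h2
      rw [div_le_iff₀ hd]; linarith [ht.1]

lemma GHf_bs_cont {b : ℝ} (hb : b = 0 ∨ 1 ≤ |b|) : ContinuousOn (GHf b) (Ioo 0 1) := by
  rcases hb with rfl | hb
  · have : ∀ x ∈ Ioo (0:ℝ) 1, GHf 0 x = 1 / x := fun x _ => GHf_zero x
    rw [continuousOn_congr this]
    exact continuousOn_const.div continuousOn_id (fun x hx => ne_of_gt hx.1)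
  · rcases le_or_gt 0 b with hb0 | hb0
    · have hb1 : 1 ≤ b := by rwa [abs_of_nonneg hb0] at hb
      have : ∀ x ∈ Ioo (0:ℝ) 1, GHf b x = 1 / (b - x) := fun x _ => GHf_of_pos (by linarith) x
      rw [continuousOn_congr this]
      exact continuousOn_const.div (continuousOn_const.sub continuousOn_id)
        (fun x hx => by dsimp; linarith [hx.2])
    · have : ∀ x ∈ Ioo (0:ℝ) 1, GHf b x = 1 / (-b + x) := fun x _ => GHf_of_neg hb0 x
      rw [continuousOn_congr this]
      exact continuousOn_const.div (continuousOn_const.add continuousOn_id)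
        (fun x hx => by dsimp; linarith [hx.1])

/-- -log x ≤ x^(-a)/a for 0 < a, 0 < x -/
lemma neg_log_le_rpow {a x : ℝ} (ha : 0 < a) (hx : 0 < x) :
    -Real.log x ≤ x ^ (-a) / a := by
  have h1 : Real.log (x ^ (-a)) ≤ x ^ (-a) - 1 :=
    Real.log_le_sub_one_of_pos (Real.rpow_pos_of_pos hx _)
  rw [Real.log_rpow hx] at h1
  rw [le_div_iff₀ ha]
  nlinarith [Real.rpow_pos_of_pos hx (-a)]

/-- |log x|^w/w! ≤ C x^(-1/2) on (0,1] -/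
lemma log_pow_bound (w : ℕ) (hw : 1 ≤ w) :
    ∃ C, 0 < C ∧ ∀ x ∈ Ioc (0:ℝ) 1,
      |Real.log x ^ w / (w.factorial : ℝ)| ≤ C * x ^ (-(2:ℝ)⁻¹) := by
  refine ⟨(2 * w) ^ w, by positivity, fun x hx => ?_⟩
  have hx0 := hx.1
  have hlog : -Real.log x ≤ (2 * w) * x ^ (-(1 / (2 * (w:ℝ)))) := by
    have := neg_log_le_rpow (a := 1 / (2 * (w:ℝ)))
      (by positivity : (0:ℝ) < 1 / (2 * (w:ℝ))) hx0
    calc -Real.log x ≤ x ^ (-(1 / (2 * (w:ℝ)))) / (1 / (2 * (w:ℝ))) := this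
    _ = (2 * w) * x ^ (-(1 / (2 * (w:ℝ)))) := by
        rw [div_div_eq_mul_div, div_one, mul_comm]
  have habs : |Real.log x| = -Real.log x := by
    rw [abs_of_nonpos (Real.log_nonpos hx0.le hx.2)]
  have hfac : (1:ℝ) ≤ (w.factorial : ℝ) := by exact_mod_cast w.factorial_pos
  have hnn : (0:ℝ) ≤ -Real.log x := by
    rw [← habs]; exact abs_nonneg _
  have key : |Real.log x| ^ w ≤ ((2 * w) * x ^ (-(1 / (2 * (w:ℝ))))) ^ w := by
    rw [habs]; exact pow_le_pow_left₀ hnn hlog w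
  have hrw : ((2 * w) * x ^ (-(1 / (2 * (w:ℝ))))) ^ w
      = (2 * w) ^ w * x ^ (-(2:ℝ)⁻¹) := by
    rw [mul_pow, ← Real.rpow_natCast (x ^ (-(1 / (2 * (w:ℝ))))) w,
      ← Real.rpow_mul hx0.le]
    have hwne : (w:ℝ) ≠ 0 := by positivity
    have he : (-(1 / (2 * (w:ℝ)))) * (w:ℝ) = -(2:ℝ)⁻¹ := by field_simp
    rw [he]
  calc |Real.log x ^ w / (w.factorial : ℝ)|
      = |Real.log x| ^ w / (w.factorial : ℝ) := by
        rw [abs_div, abs_pow, abs_of_pos (by exact_mod_cast w.factorial_pos : (0:ℝ) < (w.factorial:ℝ))]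
    _ ≤ |Real.log x| ^ w := by
        apply div_le_self (by positivity) hfac
    _ ≤ (2 * w) ^ w * x ^ (-(2:ℝ)⁻¹) := by rw [← hrw]; exact key

/-- |log x| ≤ 2(1-x) on [1/2, 1] -/
lemma log_near_one {x : ℝ} (hx : (2:ℝ)⁻¹ ≤ x) (hx1 : x ≤ 1) : |Real.log x| ≤ 2 * (1 - x) := by
  have hx0 : (0:ℝ) < x := by linarith
  have h1 : Real.log x⁻¹ ≤ x⁻¹ - 1 := Real.log_le_sub_one_of_pos (by positivity)
  rw [Real.log_inv] at h1
  have h2 : x⁻¹ - 1 = (1 - x) / x := by field_simp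
  have h3 : (1 - x) / x ≤ 2 * (1 - x) := by
    rw [div_le_iff₀ hx0]; nlinarith
  rw [abs_of_nonpos (Real.log_nonpos hx0.le hx1)]
  linarith



section Helpers
lemma rpow_half_II (a b : ℝ) : IntervalIntegrable (fun t : ℝ => t ^ (-(2:ℝ)⁻¹)) volume a b :=
  intervalIntegral.intervalIntegrable_rpow' (by norm_num)

lemma int_rpow_half {x : ℝ} (hx : 0 ≤ x) :
    ∫ t in (0:ℝ)..x, t ^ (-(2:ℝ)⁻¹) = 2 * x ^ ((2:ℝ)⁻¹) := by
  rw [integral_rpow (Or.inl (by norm_num))]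
  have h1 : (-(2:ℝ)⁻¹ + 1) = 2⁻¹ := by norm_num
  rw [h1, Real.zero_rpow (by norm_num : ((2:ℝ)⁻¹) ≠ 0), sub_zero]
  rw [div_eq_mul_inv, inv_inv, mul_comm]

lemma II_of_bound {f bnd : ℝ → ℝ} {a b : ℝ} (hab : a ≤ b)
    (hm : AEStronglyMeasurable f (volume.restrict (Ioo a b)))
    (hbnd : IntervalIntegrable bnd volume a b)
    (h : ∀ t ∈ Ioo a b, |f t| ≤ bnd t) : IntervalIntegrable f volume a b := by
  have hr : volume.restrict (Ioo a b) = volume.restrict (Ioc a b) :=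
    Measure.restrict_congr_set Ioo_ae_eq_Ioc
  refine hbnd.mono_fun' ?_ ?_
  · rw [uIoc_of_le hab, ← hr]; exact hm
  · rw [uIoc_of_le hab, ← hr]
    refine (ae_restrict_iff' measurableSet_Ioo).mpr (ae_of_all _ fun t ht => ?_)
    simpa [Real.norm_eq_abs] using h t ht

lemma abs_intervalIntegral_le {g bnd : ℝ → ℝ} {x : ℝ} (hx : 0 ≤ x)
    (h : ∀ t ∈ Ioo 0 x, |g t| ≤ bnd t)
    (hbnd : IntervalIntegrable bnd volume 0 x) :
    |∫ t in (0:ℝ)..x, g t| ≤ |∫ t in (0:ℝ)..x, bnd t| := by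
  have hr : volume.restrict (Ioo (0:ℝ) x) = volume.restrict (Ioc 0 x) :=
    Measure.restrict_congr_set Ioo_ae_eq_Ioc
  have h2 := intervalIntegral.norm_integral_le_abs_of_norm_le (μ := volume)
    (f := g) (a := 0) (b := x) (g := bnd) ?_ hbnd
  · simpa [Real.norm_eq_abs] using h2
  · rw [uIoc_of_le hx, ← hr]
    refine (ae_restrict_iff' measurableSet_Ioo).mpr (ae_of_all _ fun t ht => ?_)
    simpa [Real.norm_eq_abs] using h t ht

lemma GH_primitive_bound {g : ℝ → ℝ} {D x : ℝ} (hD : 0 ≤ D) (hx : 0 < x)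
    (h : ∀ t ∈ Ioo 0 x, |g t| ≤ D * t ^ (-(2:ℝ)⁻¹)) :
    |∫ t in (0:ℝ)..x, g t| ≤ 2 * D * x ^ ((2:ℝ)⁻¹) := by
  have hbnd : IntervalIntegrable (fun t : ℝ => D * t ^ (-(2:ℝ)⁻¹)) volume 0 x :=
    (rpow_half_II 0 x).const_mul D
  have h1 := abs_intervalIntegral_le hx.le h hbnd
  rw [intervalIntegral.integral_const_mul, int_rpow_half hx.le] at h1
  calc |∫ t in (0:ℝ)..x, g t| ≤ |D * (2 * x ^ ((2:ℝ)⁻¹))| := h1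
  _ = 2 * D * x ^ ((2:ℝ)⁻¹) := by
      rw [abs_of_nonneg (by positivity)]; ring

lemma rpow_sqrt_le_two {t : ℝ} (ht : (2:ℝ)⁻¹ ≤ t) : t ^ (-(2:ℝ)⁻¹) ≤ 2 := by
  have h1 : t ^ (-(2:ℝ)⁻¹) ≤ ((2:ℝ)⁻¹) ^ (-(2:ℝ)⁻¹) :=
    Real.rpow_le_rpow_of_nonpos (by norm_num) ht (by norm_num)
  have h2 : ((2:ℝ)⁻¹) ^ (-(2:ℝ)⁻¹) = (2:ℝ) ^ ((2:ℝ)⁻¹) := by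
    rw [Real.inv_rpow (by norm_num : (0:ℝ) ≤ 2), ← Real.rpow_neg (by norm_num : (0:ℝ) ≤ 2),
      neg_neg]
  have h3 : (2:ℝ) ^ ((2:ℝ)⁻¹) ≤ (2:ℝ) ^ (1:ℝ) :=
    Real.rpow_le_rpow_of_exponent_le (by norm_num) (by norm_num)
  rw [Real.rpow_one] at h3
  linarith
end Helpers

lemma ms_main (q : List ℝ) (hq : ∀ m ∈ q, m ≤ 0 ∨ 1 < m) :
    (∃ C, 0 < C ∧ ∀ x ∈ Ioc (0:ℝ) 1, |GH q x| ≤ C * x ^ (-(2:ℝ)⁻¹)) ∧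
    ContinuousOn (GH q) (Ioc 0 1) ∧
    (¬ (∀ y ∈ q, y = (0:ℝ)) →
      (∃ C, 0 < C ∧ ∀ x ∈ Ioc (0:ℝ) 1, |GH q x| ≤ C * x ^ ((2:ℝ)⁻¹)) ∧
      ContinuousOn (GH q) (Icc 0 1)) ∧
    (∃ M, 0 < M ∧ ∀ x ∈ Icc (2⁻¹:ℝ) 1, |GH q x - GH q 1| ≤ M * (1 - x)) := by
  induction q with
  | nil =>
    refine ⟨⟨1, one_pos, fun x hx => ?_⟩, continuousOn_const,
      fun h => absurd (by simp) h, 1, one_pos, fun x hx => ?_⟩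
    · show |(1:ℝ)| ≤ 1 * x ^ (-(2:ℝ)⁻¹)
      rw [abs_one, one_mul]
      exact Real.one_le_rpow_of_pos_of_le_one_of_nonpos hx.1 hx.2 (by norm_num)
    · show |(1:ℝ) - 1| ≤ 1 * (1 - x)
      rw [sub_self, abs_zero]; linarith [hx.2]
  | cons m p ih =>
    have hm' : m ≤ 0 ∨ 1 < m := hq m (List.mem_cons_self)
    have hp : ∀ y ∈ p, y ≤ 0 ∨ 1 < y := fun y hy => hq y (List.mem_cons_of_mem _ hy)
    obtain ⟨⟨Cp, hCp, hpb⟩, hpc, hps, -⟩ := ih hp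
    by_cases hz : m = 0 ∧ ∀ y ∈ p, y = (0:ℝ)
    · -- all-zero word
      have heq : ∀ x, GH (m::p) x
          = Real.log x ^ (p.length + 1) / ((p.length + 1).factorial : ℝ) := GH_cons_eq' hz
      set w := p.length + 1 with hw
      obtain ⟨C, hC, hCb⟩ := log_pow_bound w (Nat.le_add_left 1 _)
      have hAZ : ∀ y ∈ m :: p, y = (0:ℝ) := by
        intro y hy; rcases List.mem_cons.mp hy with rfl | hy
        exacts [hz.1, hz.2 y hy]
      have hfacpos : (0:ℝ) < (w.factorial : ℝ) := by exact_mod_cast w.factorial_pos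
      refine ⟨⟨C, hC, fun x hx => by rw [heq]; exact hCb x hx⟩, ?_,
        fun h => absurd hAZ h, 2 ^ w, by positivity, fun x hx => ?_⟩
      · have hcc : ContinuousOn (fun x : ℝ => Real.log x ^ w / ((w.factorial : ℝ))) (Ioc 0 1) :=
          ((Real.continuousOn_log.mono (fun x hx => ne_of_gt hx.1)).pow w).div_const _
        exact (continuousOn_congr (fun x _ => heq x)).mpr hcc
      · have hhalf : (2⁻¹:ℝ) ≤ x := hx.1
        have hx0 : (0:ℝ) < x := by linarith
        rw [heq, heq]
        simp only [Real.log_one, zero_pow (by omega : w ≠ 0), zero_div, sub_zero]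
        have h1 : |Real.log x| ≤ 2 * (1 - x) := log_near_one hx.1 hx.2
        have hfac : (1:ℝ) ≤ (w.factorial : ℝ) := by exact_mod_cast w.factorial_pos
        calc |Real.log x ^ w / (w.factorial:ℝ)|
            = |Real.log x| ^ w / (w.factorial:ℝ) := by
              rw [abs_div, abs_pow, abs_of_pos hfacpos]
        _ ≤ |Real.log x| ^ w := div_le_self (by positivity) hfac
        _ ≤ (2 * (1-x)) ^ w := pow_le_pow_left₀ (abs_nonneg _) h1 w
        _ = 2 ^ w * (1-x) ^ w := mul_pow _ _ _
        _ ≤ 2 ^ w * (1-x) := by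
            have h1x0 : (0:ℝ) ≤ 1 - x := by linarith [hx.2]
            have h1x1 : 1 - x ≤ 1 := by linarith
            have := pow_le_pow_of_le_one h1x0 h1x1 (show 1 ≤ w from Nat.le_add_left 1 _)
            rw [pow_one] at this
            exact mul_le_mul_of_nonneg_left this (by positivity)
    · -- integral word
      have heq : ∀ x, GH (m::p) x = ∫ t in (0:ℝ)..x, GHf m t * GH p t := GH_cons_eq hz
      set g : ℝ → ℝ := fun t => GHf m t * GH p t with hgdef
      obtain ⟨D, hD, hgb⟩ : ∃ D, 0 < D ∧ ∀ t ∈ Ioc (0:ℝ) 1, |g t| ≤ D * t ^ (-(2:ℝ)⁻¹) := by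
        by_cases hm0 : m = 0
        · have hnz : ¬ (∀ y ∈ p, y = (0:ℝ)) := fun h => hz ⟨hm0, h⟩
          obtain ⟨⟨Cs, hCs, hsb⟩, -⟩ := hps hnz
          refine ⟨Cs, hCs, fun t ht => ?_⟩
          have ht0 := ht.1
          show |GHf m t * GH p t| ≤ _
          subst hm0
          rw [abs_mul, GHf_zero, abs_of_pos (div_pos one_pos ht0)]
          calc 1 / t * |GH p t| ≤ 1 / t * (Cs * t ^ ((2:ℝ)⁻¹)) :=
            mul_le_mul_of_nonneg_left (hsb t ht) (by positivity)
          _ = Cs * (t ^ ((2:ℝ)⁻¹) / t) := by ring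
          _ = Cs * t ^ (-(2:ℝ)⁻¹) := by
              rw [show -(2:ℝ)⁻¹ = (2:ℝ)⁻¹ - 1 by norm_num, Real.rpow_sub ht0, Real.rpow_one]
        · have hm'' : m < 0 ∨ 1 < m := by
            rcases hm' with h | h
            · exact Or.inl (lt_of_le_of_ne h hm0)
            · exact Or.inr h
          obtain ⟨A, hA, hAb⟩ := GHf_ms_bound hm''
          refine ⟨A * Cp, by positivity, fun t ht => ?_⟩
          show |GHf m t * GH p t| ≤ _
          rw [abs_mul]
          calc |GHf m t| * |GH p t| ≤ A * (Cp * t ^ (-(2:ℝ)⁻¹)) :=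
            mul_le_mul (hAb t ht) (hpb t ht) (abs_nonneg _) (by linarith)
          _ = A * Cp * t ^ (-(2:ℝ)⁻¹) := by ring
      have hgc : ContinuousOn g (Ioc 0 1) := (GHf_ms_cont hm').mul hpc
      have hbnd1 : IntervalIntegrable (fun t : ℝ => D * t ^ (-(2:ℝ)⁻¹)) volume 0 1 :=
        (rpow_half_II 0 1).const_mul D
      have hgint : IntervalIntegrable g volume 0 1 :=
        II_of_bound zero_le_one
          ((hgc.mono Ioo_subset_Ioc_self).aestronglyMeasurable measurableSet_Ioo) hbnd1
          (fun t ht => hgb t (Ioo_subset_Ioc_self ht))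
      have hstrong : ∀ x ∈ Ioc (0:ℝ) 1, |GH (m::p) x| ≤ 2 * D * x ^ ((2:ℝ)⁻¹) := by
        intro x hx
        rw [heq]
        exact GH_primitive_bound hD.le hx.1
          (fun t ht => hgb t ⟨ht.1, le_trans ht.2.le hx.2⟩)
      have hIccInt : IntegrableOn g (Icc 0 1) volume := by
        rw [integrableOn_Icc_iff_integrableOn_Ioc]
        exact (intervalIntegrable_iff_integrableOn_Ioc_of_le zero_le_one).mp hgint
      have hcontIcc : ContinuousOn (GH (m::p)) (Icc 0 1) := by
        rw [show GH (m::p) = fun x => ∫ t in (0:ℝ)..x, g t from funext heq]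
        have h2 := intervalIntegral.continuousOn_primitive_interval (μ := volume)
          (a := 0) (b := 1) (f := g) (by rwa [uIcc_of_le zero_le_one])
        rwa [uIcc_of_le zero_le_one] at h2
      refine ⟨⟨2*D, by positivity, fun x hx => ?_⟩, hcontIcc.mono Ioc_subset_Icc_self,
        fun _ => ⟨⟨2*D, by positivity, hstrong⟩, hcontIcc⟩, 2*D, by positivity, fun x hx => ?_⟩
      · exact (hstrong x hx).trans (mul_le_mul_of_nonneg_left
          (Real.rpow_le_rpow_of_exponent_ge hx.1 hx.2 (by norm_num)) (by positivity))
      · have hx0 : (0:ℝ) < x := by have := hx.1; norm_num at this ⊢; linarith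
        have hi1 : IntervalIntegrable g volume 0 x := hgint.mono_set'
          (by rw [uIoc_of_le hx0.le, uIoc_of_le zero_le_one]; exact Ioc_subset_Ioc_right hx.2)
        have hsub : GH (m::p) 1 - GH (m::p) x = ∫ t in x..1, g t := by
          rw [heq, heq]
          exact intervalIntegral.integral_interval_sub_left hgint hi1
        have hb2 : ∀ t ∈ uIoc x 1, ‖g t‖ ≤ 2 * D := by
          intro t ht
          rw [uIoc_of_le hx.2] at ht
          have ht1 : t ∈ Ioc (0:ℝ) 1 := ⟨lt_trans hx0 ht.1, ht.2⟩
          have h3 : t ^ (-(2:ℝ)⁻¹) ≤ 2 := rpow_sqrt_le_two (le_trans hx.1 ht.1.le)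
          calc ‖g t‖ = |g t| := rfl
          _ ≤ D * t ^ (-(2:ℝ)⁻¹) := hgb t ht1
          _ ≤ D * 2 := mul_le_mul_of_nonneg_left h3 hD.le
          _ = 2 * D := mul_comm _ _
        have h4 := intervalIntegral.norm_integral_le_of_norm_le_const hb2
        rw [abs_sub_comm, hsub]
        calc |∫ t in x..1, g t| ≤ 2 * D * |1 - x| := h4
        _ = 2 * D * (1 - x) := by rw [abs_of_nonneg (by linarith [hx.2])]

open scoped Topology

lemma GH_nil (x : ℝ) : GH [] x = 1 := rfl

lemma bs_main : ∀ (q : List ℝ) (hne : q ≠ []),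
    (∀ c ∈ q, c = 0 ∨ 1 ≤ |c|) → q.getLast hne ≠ 0 →
    (∃ C, 0 < C ∧ ∀ x ∈ Ioc (0:ℝ) (2⁻¹:ℝ), |GH q x| ≤ C * x ^ ((2:ℝ)⁻¹)) ∧
    ContinuousOn (GH q) (Ico 0 1) ∧
    (∀ ε ∈ Ioc (0:ℝ) (2⁻¹:ℝ), ∃ C, 0 < C ∧ ∀ x ∈ Ico (2⁻¹:ℝ) 1,
      |GH q x| ≤ C * (1-x) ^ (-ε)) := by
  intro q
  induction q with
  | nil => intro hne; exact absurd rfl hne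
  | cons b p ih =>
    intro hne hq hlast
    have hb' : b = 0 ∨ 1 ≤ |b| := hq b (List.mem_cons_self)
    have hpq : ∀ c ∈ p, c = 0 ∨ 1 ≤ |c| := fun c hc => hq c (List.mem_cons_of_mem _ hc)
    have hnz : ¬ (b = 0 ∧ ∀ y ∈ p, y = (0:ℝ)) := by
      rintro ⟨hb0, hall⟩
      rcases eq_or_ne p [] with rfl | hpne
      · exact hlast (by simpa using hb0)
      · have h1 : (b :: p).getLast hne = p.getLast hpne := List.getLast_cons hpne
        exact hlast (h1.trans (hall _ (List.getLast_mem hpne)))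
    have heq : ∀ x, GH (b::p) x = ∫ t in (0:ℝ)..x, GHf b t * GH p t := GH_cons_eq hnz
    set g : ℝ → ℝ := fun t => GHf b t * GH p t with hgdef
    -- tail facts
    have tail_cont : ContinuousOn (GH p) (Ioo 0 1) := by
      rcases eq_or_ne p [] with rfl | hpne
      · exact continuousOn_const
      · have h1 : (b :: p).getLast hne = p.getLast hpne := List.getLast_cons hpne
        exact ((ih hpne hpq (h1 ▸ hlast)).2.1).mono (fun x hx => ⟨hx.1.le, hx.2⟩)
    have tail1 : ∃ Cp, 0 < Cp ∧ ∀ t ∈ Ioc (0:ℝ) (2⁻¹:ℝ), |g t| ≤ Cp * t ^ (-(2:ℝ)⁻¹) := by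
      rcases eq_or_ne p [] with rfl | hpne
      · have hb0 : b ≠ 0 := fun h => hlast (by simpa using h)
        have hb1 : 1 ≤ |b| := hb'.resolve_left hb0
        refine ⟨2, two_pos, fun t ht => ?_⟩
        have h2 : |g t| = |GHf b t| := by
          show |GHf b t * GH [] t| = _
          rw [GH_nil, mul_one]
        rw [h2]
        refine (GHf_bs_bound1' hb1 t ht).trans ?_
        have h3 : (1:ℝ) ≤ t ^ (-(2:ℝ)⁻¹) :=
          Real.one_le_rpow_of_pos_of_le_one_of_nonpos ht.1 (le_trans ht.2 (by norm_num))
            (by norm_num)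
        nlinarith
      · have h1 : (b :: p).getLast hne = p.getLast hpne := List.getLast_cons hpne
        obtain ⟨⟨Cs, hCs, hsb⟩, -, -⟩ := ih hpne hpq (h1 ▸ hlast)
        refine ⟨Cs, hCs, fun t ht => ?_⟩
        have ht0 := ht.1
        show |GHf b t * GH p t| ≤ _
        rw [abs_mul]
        calc |GHf b t| * |GH p t| ≤ (1/t) * (Cs * t ^ ((2:ℝ)⁻¹)) :=
          mul_le_mul (GHf_bs_bound1 hb' t ht) (hsb t ht) (abs_nonneg _) (by positivity)
        _ = Cs * (t ^ ((2:ℝ)⁻¹) / t) := by ring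
        _ = Cs * t ^ (-(2:ℝ)⁻¹) := by
            rw [show -(2:ℝ)⁻¹ = (2:ℝ)⁻¹ - 1 by norm_num, Real.rpow_sub ht0, Real.rpow_one]
    have tail2 : ∀ ε ∈ Ioc (0:ℝ) (2⁻¹:ℝ), ∃ Cq, 0 < Cq ∧ ∀ t ∈ Ico (2⁻¹:ℝ) 1,
        |g t| ≤ Cq * (1-t) ^ (-(1+ε)) := by
      intro ε hε
      have key : ∀ t ∈ Ico (2⁻¹:ℝ) 1, (1-t) ^ (-(1:ℝ)) ≤ (1-t) ^ (-(1+ε)) := by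
        intro t ht
        have h1t : 0 < 1 - t := by linarith [ht.2]
        exact Real.rpow_le_rpow_of_exponent_ge h1t (by linarith [ht.1]) (by linarith [hε.1])
      rcases eq_or_ne p [] with rfl | hpne
      · refine ⟨2, two_pos, fun t ht => ?_⟩
        have h1t : 0 < 1 - t := by linarith [ht.2]
        have h2 : |g t| = |GHf b t| := by
          show |GHf b t * GH [] t| = _
          rw [GH_nil, mul_one]
        rw [h2]
        refine (GHf_bs_bound2 hb' t ht).trans ?_
        rw [show (2:ℝ)/(1-t) = 2 * (1-t) ^ (-(1:ℝ)) by
          rw [Real.rpow_neg_one]; rw [div_eq_mul_inv]]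
        exact mul_le_mul_of_nonneg_left (key t ht) (by norm_num)
      · have h1 : (b :: p).getLast hne = p.getLast hpne := List.getLast_cons hpne
        obtain ⟨-, -, h2⟩ := ih hpne hpq (h1 ▸ hlast)
        obtain ⟨Cs, hCs, hsb⟩ := h2 ε hε
        refine ⟨2*Cs, by positivity, fun t ht => ?_⟩
        have h1t : 0 < 1 - t := by linarith [ht.2]
        show |GHf b t * GH p t| ≤ _
        rw [abs_mul]
        calc |GHf b t| * |GH p t| ≤ (2/(1-t)) * (Cs * (1-t) ^ (-ε)) :=
          mul_le_mul (GHf_bs_bound2 hb' t ht) (hsb t ht) (abs_nonneg _) (by positivity)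
        _ = 2*Cs * ((1-t) ^ (-(1:ℝ)) * (1-t) ^ (-ε)) := by
            rw [Real.rpow_neg_one]; field_simp
        _ = 2*Cs * (1-t) ^ (-(1+ε)) := by
            rw [← Real.rpow_add h1t]; ring_nf
    obtain ⟨Cp, hCp, htb1⟩ := tail1
    have hgc : ContinuousOn g (Ioo 0 1) := (GHf_bs_cont hb').mul tail_cont
    have hIhalf : IntervalIntegrable g volume 0 2⁻¹ := by
      refine II_of_bound (by norm_num)
        ((hgc.mono (Ioo_subset_Ioo_right (by norm_num))).aestronglyMeasurable measurableSet_Ioo)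
        ((rpow_half_II 0 2⁻¹).const_mul Cp) (fun t ht => htb1 t ⟨ht.1, ht.2.le⟩)
    have hImid : ∀ u ∈ Ico (2⁻¹:ℝ) 1, IntervalIntegrable g volume 2⁻¹ u := by
      intro u hu
      apply ContinuousOn.intervalIntegrable
      refine hgc.mono ?_
      rw [uIcc_of_le hu.1]
      exact fun y hy => ⟨lt_of_lt_of_le (by norm_num) hy.1, lt_of_le_of_lt hy.2 hu.2⟩
    have hIu : ∀ u ∈ Ioo (0:ℝ) 1, IntervalIntegrable g volume 0 u := by
      intro u hu
      rcases le_or_gt u 2⁻¹ with h | h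
      · refine hIhalf.mono_set' ?_
        rw [uIoc_of_le hu.1.le, uIoc_of_le (by norm_num : (0:ℝ) ≤ 2⁻¹)]
        exact Ioc_subset_Ioc_right h
      · exact hIhalf.trans (hImid u ⟨h.le, hu.2⟩)
    have hcont : ContinuousOn (GH (b::p)) (Ico 0 1) := by
      intro x hx
      have hxu : x < (1+x)/2 := by linarith [hx.2]
      have hu1 : (1+x)/2 < 1 := by linarith [hx.2]
      have hu0 : (0:ℝ) < (1+x)/2 := by linarith [hx.1]
      have hInt : IntegrableOn g (Icc 0 ((1+x)/2)) volume := by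
        rw [integrableOn_Icc_iff_integrableOn_Ioc]
        exact (intervalIntegrable_iff_integrableOn_Ioc_of_le hu0.le).mp
          (hIu _ ⟨hu0, hu1⟩)
      have hcc : ContinuousOn (GH (b::p)) (Icc 0 ((1+x)/2)) := by
        rw [show GH (b::p) = fun x => ∫ t in (0:ℝ)..x, g t from funext heq]
        have h2 := intervalIntegral.continuousOn_primitive_interval (μ := volume)
          (a := 0) (b := (1+x)/2) (f := g) (by rwa [uIcc_of_le hu0.le])
        rwa [uIcc_of_le hu0.le] at h2
      have hmem : Icc 0 ((1+x)/2) ∈ 𝓝[Ico 0 1] x :=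
        mem_nhdsWithin.mpr ⟨Iio ((1+x)/2), isOpen_Iio, hxu, fun y hy => ⟨hy.2.1, le_of_lt hy.1⟩⟩
      exact (hcc x ⟨hx.1, hxu.le⟩).mono_of_mem_nhdsWithin hmem
    refine ⟨⟨2*Cp, by positivity, fun x hx => ?_⟩, hcont, ?_⟩
    · rw [heq]
      exact GH_primitive_bound hCp.le hx.1 (fun t ht => htb1 t ⟨ht.1, le_trans ht.2.le hx.2⟩)
    · intro ε hε
      obtain ⟨Cq, hCq, htb2⟩ := tail2 ε hε
      refine ⟨2*Cp + Cq/ε, add_pos (by positivity) (div_pos (by positivity) hε.1), fun x hx => ?_⟩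
      have hx0 : (0:ℝ) < x := by linarith [hx.1]
      have h1x : 0 < 1 - x := by linarith [hx.2]
      have h1x2 : 1 - x ≤ 2⁻¹ := by linarith [hx.1]
      have hone : (1:ℝ) ≤ (1-x) ^ (-ε) :=
        Real.one_le_rpow_of_pos_of_le_one_of_nonpos h1x (by linarith) (by linarith [hε.1])
      have hsplit : GH (b::p) x = (∫ t in (0:ℝ)..2⁻¹, g t) + ∫ t in (2⁻¹:ℝ)..x, g t := by
        rw [heq]
        exact (intervalIntegral.integral_add_adjacent_intervals hIhalf (hImid x hx)).symm
      have hf1 : |∫ t in (0:ℝ)..2⁻¹, g t| ≤ 2*Cp := by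
        refine (GH_primitive_bound hCp.le (by norm_num)
          (fun t ht => htb1 t ⟨ht.1, ht.2.le⟩)).trans ?_
        have h3 : ((2:ℝ)⁻¹) ^ ((2:ℝ)⁻¹) ≤ 1 :=
          Real.rpow_le_one (by norm_num) (by norm_num) (by norm_num)
        nlinarith
      -- second piece
      have hbcont : ContinuousOn (fun t : ℝ => Cq * (1-t) ^ (-(1+ε))) (uIcc (2⁻¹:ℝ) x) := by
        rw [uIcc_of_le hx.1]
        refine continuousOn_const.mul ?_
        refine ContinuousOn.rpow_const (continuousOn_const.sub continuousOn_id)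
          (fun t ht => Or.inl ?_)
        have ht2 : t ≤ x := ht.2
        have h3 : (0:ℝ) < 1 - t := by linarith [hx.2]
        dsimp at h3 ⊢
        exact ne_of_gt h3
      have hfb : ∀ t ∈ uIoc (2⁻¹:ℝ) x, ‖g t‖ ≤ Cq * (1-t) ^ (-(1+ε)) := by
        intro t ht
        rw [uIoc_of_le hx.1] at ht
        rw [Real.norm_eq_abs]
        exact htb2 t ⟨le_of_lt ht.1, lt_of_le_of_lt ht.2 hx.2⟩
      have hf2 : |∫ t in (2⁻¹:ℝ)..x, g t|
          ≤ |∫ t in (2⁻¹:ℝ)..x, Cq * (1-t) ^ (-(1+ε))| := by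
        have h5 := intervalIntegral.norm_integral_le_abs_of_norm_le (μ := volume) (f := g)
          (a := (2⁻¹:ℝ)) (b := x) ((ae_restrict_iff' measurableSet_uIoc).mpr (ae_of_all _ hfb)) hbcont.intervalIntegrable
        simpa [Real.norm_eq_abs] using h5
      have h0mem : (0:ℝ) ∉ uIcc (1-x) (2⁻¹:ℝ) := by
        rw [uIcc_of_le h1x2]
        exact fun h => absurd h.1 (not_le.mpr h1x)
      have hval : ∫ t in (2⁻¹:ℝ)..x, (1-t) ^ (-(1+ε))
          = ((1-x) ^ (-ε) - ((2:ℝ)⁻¹) ^ (-ε))/ε := by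
        have hc := intervalIntegral.integral_comp_sub_left (a := (2⁻¹:ℝ)) (b := x)
          (fun s : ℝ => s ^ (-(1+ε))) 1
        rw [hc, show (1:ℝ) - 2⁻¹ = 2⁻¹ by norm_num,
          integral_rpow (Or.inr ⟨by intro hcon; have := hε.1; nlinarith, h0mem⟩),
          show -(1+ε)+1 = -ε by ring, div_neg, ← neg_div, neg_sub]
      have hf2' : |∫ t in (2⁻¹:ℝ)..x, g t| ≤ Cq/ε * (1-x) ^ (-ε) := by
        refine hf2.trans ?_
        rw [intervalIntegral.integral_const_mul, hval]
        have hge : ((2:ℝ)⁻¹) ^ (-ε) ≤ (1-x) ^ (-ε) :=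
          Real.rpow_le_rpow_of_nonpos h1x h1x2 (by linarith [hε.1])
        have hBnn : (0:ℝ) ≤ ((2:ℝ)⁻¹) ^ (-ε) := Real.rpow_nonneg (by norm_num) _
        have hnn : (0:ℝ) ≤ Cq * (((1-x) ^ (-ε) - ((2:ℝ)⁻¹) ^ (-ε))/ε) :=
          mul_nonneg (by positivity) (div_nonneg (by linarith) hε.1.le)
        rw [abs_of_nonneg hnn,
          show Cq * (((1-x) ^ (-ε) - ((2:ℝ)⁻¹) ^ (-ε))/ε)
            = Cq/ε * ((1-x) ^ (-ε) - ((2:ℝ)⁻¹) ^ (-ε)) by ring]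
        exact mul_le_mul_of_nonneg_left (sub_le_self _ hBnn) (div_nonneg (by positivity) hε.1.le)
      rw [hsplit]
      calc |(∫ t in (0:ℝ)..2⁻¹, g t) + ∫ t in (2⁻¹:ℝ)..x, g t|
          ≤ |∫ t in (0:ℝ)..2⁻¹, g t| + |∫ t in (2⁻¹:ℝ)..x, g t| := abs_add_le _ _
      _ ≤ 2*Cp + Cq/ε * (1-x) ^ (-ε) := add_le_add hf1 hf2'
      _ ≤ (2*Cp + Cq/ε) * (1-x) ^ (-ε) := by
          have hd : (0:ℝ) ≤ Cq/ε := div_nonneg hCq.le hε.1.le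
          nlinarith [hone, hCp.le]

/-- Regularized Mellin-transform identities at the pole `1/(1−x)`.
For a word `m⃗` with letters in `ℝ ∖ (0,1]` and a word `b⃗` with letters in
`ℝ ∖ ((−1,0) ∪ (0,1))` whose last letter is nonzero:
`H_{m⃗}(1)` is finite (i.e. `H_{m⃗}(x) → H_{m⃗}(1)` as `x → 1⁻`),
`∫_0^1 (H_{m⃗}(x) − H_{m⃗}(1))/(1−x) dx` is finite, `H_{0,b⃗}(1)` is finite, and
for every `n ≥ 1`:
(i) `∫_0^1 (xⁿ−1) H_{m⃗}(x)/(1−x) dx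
  = ∫_0^1 xⁿ(H_{m⃗}(x)−H_{m⃗}(1))/(1−x) dx − ∫_0^1 (H_{m⃗}(x)−H_{m⃗}(1))/(1−x) dx − S₁(n)·H_{m⃗}(1)`;
(ii) `∫_0^1 (xⁿ−1) H_{b⃗}(1−x)/(1−x) dx = ∫_0^1 xⁿ H_{b⃗}(1−x)/(1−x) dx − H_{0,b⃗}(1)`. -/
theorem gh_mellin_pole_one_regularization (ms : List ℝ) (hms : ms ≠ [])
    (hm : ∀ m ∈ ms, ¬ (0 < m ∧ m ≤ 1))
    (bs : List ℝ) (hbs : bs ≠ [])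
    (hb : ∀ c ∈ bs, c ∉ Set.Ioo (-1:ℝ) 0 ∧ c ∉ Set.Ioo (0:ℝ) 1)
    (hblast : bs.getLast hbs ≠ 0) :
    Filter.Tendsto (fun x => GH ms x) (nhdsWithin 1 (Set.Iio 1)) (nhds (GH ms 1)) ∧
    IntervalIntegrable (fun x => (GH ms x - GH ms 1) / (1 - x)) MeasureTheory.volume 0 1 ∧
    Filter.Tendsto (fun x => GH ((0:ℝ) :: bs) x) (nhdsWithin 1 (Set.Iio 1))
      (nhds (GH ((0:ℝ) :: bs) 1)) ∧
    ∀ n : ℕ, 1 ≤ n →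
      ((∫ x in (0:ℝ)..1, (x ^ n - 1) * GH ms x / (1 - x)) =
        (∫ x in (0:ℝ)..1, x ^ n * (GH ms x - GH ms 1) / (1 - x)) -
        (∫ x in (0:ℝ)..1, (GH ms x - GH ms 1) / (1 - x)) -
        (∑ i ∈ Finset.Icc 1 n, (1 : ℝ) / i) * GH ms 1) ∧
      ((∫ x in (0:ℝ)..1, (x ^ n - 1) * GH bs (1 - x) / (1 - x)) =
        (∫ x in (0:ℝ)..1, x ^ n * GH bs (1 - x) / (1 - x)) - GH ((0:ℝ) :: bs) 1) := by
  -- ms side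
  have hm' : ∀ m ∈ ms, m ≤ 0 ∨ 1 < m := by
    intro m hm2
    have h := hm m hm2
    push_neg at h
    rcases le_or_gt m 0 with h1 | h1
    · exact Or.inl h1
    · exact Or.inr (h h1)
  obtain ⟨⟨Cm, hCm, hmb⟩, hmc, hms_strong, Mm, hMm, hmlin⟩ := ms_main ms hm'
  -- conclusion 1
  have tends_ms : Filter.Tendsto (fun x => GH ms x) (nhdsWithin 1 (Set.Iio 1))
      (nhds (GH ms 1)) := by
    by_cases hz : ∀ y ∈ ms, y = (0:ℝ)
    · obtain ⟨m, p, rfl⟩ : ∃ m p, ms = m :: p := by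
        cases ms with
        | nil => exact absurd rfl hms
        | cons a l => exact ⟨a, l, rfl⟩
      have hz' : m = 0 ∧ ∀ y ∈ p, y = (0:ℝ) :=
        ⟨hz m (List.mem_cons_self), fun y hy => hz y (List.mem_cons_of_mem _ hy)⟩
      have heq := GH_cons_eq' hz'
      rw [show (fun x => GH (m::p) x)
          = fun x => Real.log x ^ (p.length + 1) / ((p.length + 1).factorial : ℝ)
          from funext heq, heq 1]
      have hca : ContinuousAt
          (fun x : ℝ => Real.log x ^ (p.length + 1) / ((p.length + 1).factorial : ℝ)) 1 :=
        ((Real.continuousAt_log one_ne_zero).pow _).div_const _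
      exact hca.tendsto.mono_left nhdsWithin_le_nhds
    · have hcwa : ContinuousWithinAt (GH ms) (Icc 0 1) 1 :=
        (hms_strong hz).2 1 (by norm_num)
      have h2 : ContinuousWithinAt (GH ms) (Ioo 0 1) 1 := hcwa.mono Ioo_subset_Icc_self
      rw [show (nhdsWithin (1:ℝ) (Set.Iio 1)) = nhdsWithin (1:ℝ) (Set.Ioo 0 1) from
        (nhdsWithin_Ioo_eq_nhdsLT one_pos).symm]
      exact h2
  -- conclusion 2
  have hmc_Ioo : ContinuousOn (GH ms) (Ioo 0 1) :=
    hmc.mono (fun x hx => ⟨hx.1, hx.2.le⟩)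
  have hf3 : IntervalIntegrable (fun x => (GH ms x - GH ms 1) / (1 - x)) volume 0 1 := by
    have part_a : IntervalIntegrable (fun x => (GH ms x - GH ms 1) / (1 - x)) volume 0 2⁻¹ := by
      refine II_of_bound (by norm_num) ?_
        (((rpow_half_II 0 2⁻¹).const_mul (2*Cm)).add
          (_root_.intervalIntegrable_const (c := 2 * |GH ms 1|))) ?_
      · refine ContinuousOn.aestronglyMeasurable ?_ measurableSet_Ioo
        refine ((hmc_Ioo.mono (Ioo_subset_Ioo_right (by norm_num))).sub continuousOn_const).div
          (continuousOn_const.sub continuousOn_id) (fun x hx => ?_)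
        have : x < 2⁻¹ := hx.2
        dsimp; intro hcon; simp only [sub_eq_zero] at hcon; rw [← hcon] at this; norm_num at this
      · intro t ht
        have ht0 := ht.1
        have ht2 : t < 2⁻¹ := ht.2
        have h1t : (2⁻¹:ℝ) ≤ 1 - t := by linarith
        have hbm := hmb t ⟨ht0, by linarith⟩
        rw [abs_div, abs_of_pos (by linarith : (0:ℝ) < 1 - t), div_le_iff₀ (by linarith)]
        have habs : |GH ms t - GH ms 1| ≤ Cm * t ^ (-(2:ℝ)⁻¹) + |GH ms 1| :=
          (abs_sub _ _).trans (by linarith)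
        have hrnn : (0:ℝ) ≤ t ^ (-(2:ℝ)⁻¹) := Real.rpow_nonneg ht0.le _
        have hA : (0:ℝ) ≤ 2 * Cm * t ^ (-(2:ℝ)⁻¹) + 2 * |GH ms 1| :=
          add_nonneg (mul_nonneg (by positivity) hrnn) (by positivity)
        have hstep : (2 * Cm * t ^ (-(2:ℝ)⁻¹) + 2 * |GH ms 1|) * 2⁻¹
            ≤ (2 * Cm * t ^ (-(2:ℝ)⁻¹) + 2 * |GH ms 1|) * (1 - t) :=
          mul_le_mul_of_nonneg_left h1t hA
        linarith
    have part_b : IntervalIntegrable (fun x => (GH ms x - GH ms 1) / (1 - x)) volume 2⁻¹ 1 := by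
      refine II_of_bound (by norm_num) ?_ (_root_.intervalIntegrable_const (c := Mm)) ?_
      · refine ContinuousOn.aestronglyMeasurable ?_ measurableSet_Ioo
        refine ((hmc_Ioo.mono (Ioo_subset_Ioo_left (by norm_num))).sub continuousOn_const).div
          (continuousOn_const.sub continuousOn_id) (fun x hx => ?_)
        have : x < 1 := hx.2
        dsimp; intro hcon; simp only [sub_eq_zero] at hcon; rw [← hcon] at this; norm_num at this
      · intro t ht
        have h1t : (0:ℝ) < 1 - t := by linarith [ht.2]
        have := hmlin t ⟨ht.1.le, by linarith [ht.2]⟩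
        rw [abs_div, abs_of_pos h1t, div_le_iff₀ h1t]
        linarith
    exact part_a.trans part_b
  -- bs side
  have hbs' : ∀ c ∈ bs, c = 0 ∨ 1 ≤ |c| := by
    intro c hc
    obtain ⟨h1, h2⟩ := hb c hc
    by_cases h : c = 0
    · exact Or.inl h
    · right
      rcases lt_or_gt_of_ne h with hlt | hgt
      · have hc1 : c ≤ -1 := by
          by_contra hcon
          push_neg at hcon
          exact h1 ⟨hcon, hlt⟩
        rw [abs_of_neg hlt]; linarith
      · have hc1 : 1 ≤ c := by
          by_contra hcon
          push_neg at hcon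
          exact h2 ⟨hgt, hcon⟩
        rw [abs_of_pos hgt]; linarith
  obtain ⟨⟨Cb, hCb, hbb⟩, hbc, hbB2⟩ := bs_main bs hbs hbs' hblast
  obtain ⟨Cb2, hCb2, hbb2⟩ := hbB2 2⁻¹ ⟨by norm_num, le_refl _⟩
  set h0 : ℝ → ℝ := fun u => GHf 0 u * GH bs u with hh0
  have h0nz : ¬((0:ℝ) = 0 ∧ ∀ y ∈ bs, y = (0:ℝ)) := by
    rintro ⟨-, hall⟩
    exact hblast (hall _ (List.getLast_mem hbs))
  have heq0 : ∀ x, GH ((0:ℝ)::bs) x = ∫ t in (0:ℝ)..x, h0 t := GH_cons_eq h0nz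
  have h0b : ∀ u ∈ Ioo (0:ℝ) 1, |h0 u|
      ≤ Cb * u ^ (-(2:ℝ)⁻¹) + 2*Cb2 * (1-u) ^ (-(2:ℝ)⁻¹) := by
    intro u hu
    have hu0 := hu.1
    have h2 : |h0 u| = |GH bs u| / u := by
      show |GHf 0 u * GH bs u| = _
      rw [abs_mul, GHf_zero, abs_of_pos (div_pos one_pos hu0)]; ring
    rcases le_or_gt u 2⁻¹ with hle | hlt
    · have hb1 := hbb u ⟨hu0, hle⟩
      have key : |GH bs u| / u ≤ Cb * u ^ (-(2:ℝ)⁻¹) := by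
        rw [div_le_iff₀ hu0]
        calc |GH bs u| ≤ Cb * u ^ ((2:ℝ)⁻¹) := hb1
        _ = Cb * u ^ (-(2:ℝ)⁻¹) * u := by
            rw [show ((2:ℝ)⁻¹) = -(2:ℝ)⁻¹ + 1 by norm_num, Real.rpow_add hu0,
              Real.rpow_one]
            ring
      rw [h2]
      have hnn : (0:ℝ) ≤ 2*Cb2 * (1-u) ^ (-(2:ℝ)⁻¹) :=
        mul_nonneg (by positivity) (Real.rpow_nonneg (by linarith [hu.2]) _)
      linarith
    · have hb1 := hbb2 u ⟨hlt.le, hu.2⟩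
      have key : |GH bs u| / u ≤ 2*Cb2 * (1-u) ^ (-(2:ℝ)⁻¹) := by
        rw [div_le_iff₀ hu0]
        have hrnn : (0:ℝ) ≤ (1-u) ^ (-(2:ℝ)⁻¹) := Real.rpow_nonneg (by linarith [hu.2]) _
        calc |GH bs u| ≤ Cb2 * (1-u) ^ (-(2:ℝ)⁻¹) := hb1
        _ ≤ 2*Cb2 * (1-u) ^ (-(2:ℝ)⁻¹) * u := by
            have hstep : 2*Cb2 * (1-u) ^ (-(2:ℝ)⁻¹) * 2⁻¹ ≤ 2*Cb2 * (1-u) ^ (-(2:ℝ)⁻¹) * u :=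
              mul_le_mul_of_nonneg_left hlt.le (mul_nonneg (by positivity) hrnn)
            linarith
      rw [h2]
      have hnn : (0:ℝ) ≤ Cb * u ^ (-(2:ℝ)⁻¹) :=
        mul_nonneg hCb.le (Real.rpow_nonneg hu0.le _)
      linarith
  have hrefl_II : IntervalIntegrable (fun u : ℝ => (1-u) ^ (-(2:ℝ)⁻¹)) volume 0 1 := by
    have h5 := (rpow_half_II 0 1).comp_sub_left 1
    rw [show (1:ℝ) - 1 = 0 from by norm_num, show (1:ℝ) - 0 = 1 from by norm_num] at h5
    exact h5.symm
  have h0cont : ContinuousOn h0 (Ioo 0 1) :=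
    (GHf_bs_cont (Or.inl rfl)).mul (hbc.mono (fun x hx => ⟨hx.1.le, hx.2⟩))
  have h0int : IntervalIntegrable h0 volume 0 1 :=
    II_of_bound zero_le_one (h0cont.aestronglyMeasurable measurableSet_Ioo)
      (((rpow_half_II 0 1).const_mul Cb).add (hrefl_II.const_mul (2*Cb2))) h0b
  have hcont0 : ContinuousOn (GH ((0:ℝ)::bs)) (Icc 0 1) := by
    rw [show GH ((0:ℝ)::bs) = fun x => ∫ t in (0:ℝ)..x, h0 t from funext heq0]
    have hInt : IntegrableOn h0 (Icc 0 1) volume := by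
      rw [integrableOn_Icc_iff_integrableOn_Ioc]
      exact (intervalIntegrable_iff_integrableOn_Ioc_of_le zero_le_one).mp h0int
    have h2 := intervalIntegral.continuousOn_primitive_interval (μ := volume)
      (a := 0) (b := 1) (f := h0) (by rwa [uIcc_of_le zero_le_one])
    rwa [uIcc_of_le zero_le_one] at h2
  have tends_0bs : Filter.Tendsto (fun x => GH ((0:ℝ)::bs) x) (nhdsWithin 1 (Set.Iio 1))
      (nhds (GH ((0:ℝ)::bs) 1)) := by
    have hcwa : ContinuousWithinAt (GH ((0:ℝ)::bs)) (Icc 0 1) 1 := hcont0 1 (by norm_num)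
    have h2 : ContinuousWithinAt (GH ((0:ℝ)::bs)) (Ioo 0 1) 1 := hcwa.mono Ioo_subset_Icc_self
    rw [show (nhdsWithin (1:ℝ) (Set.Iio 1)) = nhdsWithin (1:ℝ) (Set.Ioo 0 1) from
      (nhdsWithin_Ioo_eq_nhdsLT one_pos).symm]
    exact h2
  refine ⟨tends_ms, hf3, tends_0bs, fun n hn => ⟨?_, ?_⟩⟩
  · -- identity (i)
    simp only [mul_div_assoc]
    have hf2 : IntervalIntegrable (fun x => x ^ n * ((GH ms x - GH ms 1) / (1 - x)))
        volume 0 1 := hf3.continuousOn_mul (continuous_pow n).continuousOn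
    have hS : IntervalIntegrable
        (fun x => (∑ i ∈ Finset.range n, x ^ i) * GH ms 1) volume 0 1 := by
      apply Continuous.intervalIntegrable
      exact (continuous_finset_sum _ (fun i _ => continuous_pow i)).mul continuous_const
    have hne1 : ∀ᵐ x : ℝ ∂volume, x ≠ 1 := by
      rw [ae_iff]
      have hset : {x : ℝ | ¬ x ≠ 1} = {1} := by ext x; simp
      rw [hset]
      exact measure_singleton 1
    have hae : ∀ᵐ x ∂volume, x ∈ uIoc (0:ℝ) 1 →
        (x ^ n - 1) * (GH ms x / (1 - x))
        = x ^ n * ((GH ms x - GH ms 1) / (1 - x)) - (GH ms x - GH ms 1) / (1 - x)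
          - (∑ i ∈ Finset.range n, x ^ i) * GH ms 1 := by
      filter_upwards [hne1] with x hx1 _
      have h1x : (1:ℝ) - x ≠ 0 := sub_ne_zero.mpr (Ne.symm hx1)
      have hg : (∑ i ∈ Finset.range n, x ^ i) * (x - 1) = x ^ n - 1 := geom_sum_mul x n
      field_simp
      linear_combination (-(GH ms 1) * (1 - x) - x * GH ms 1) * hg
    rw [intervalIntegral.integral_congr_ae hae,
      intervalIntegral.integral_sub (hf2.sub hf3) hS, intervalIntegral.integral_sub hf2 hf3]
    have hSval : ∫ x in (0:ℝ)..1, (∑ i ∈ Finset.range n, x ^ i) * GH ms 1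
        = (∑ i ∈ Finset.Icc 1 n, (1:ℝ)/i) * GH ms 1 := by
      rw [intervalIntegral.integral_mul_const]
      congr 1
      rw [intervalIntegral.integral_finset_sum
        (fun i _ => (continuous_pow i).intervalIntegrable 0 1)]
      have hval : ∀ i ∈ Finset.range n, (∫ x in (0:ℝ)..1, x ^ i) = 1/((i:ℝ)+1) := by
        intro i _
        rw [integral_pow]
        norm_num
      rw [Finset.sum_congr rfl hval,
        show Finset.Icc 1 n = Finset.Ico 1 (n+1) from (Finset.Ico_add_one_right_eq_Icc 1 n).symm,
        Finset.sum_Ico_eq_sum_range]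
      refine Finset.sum_congr (by norm_num) (fun i _ => ?_)
      push_cast
      rw [add_comm]
    rw [hSval]
  · -- identity (ii)
    simp only [mul_div_assoc]
    have hg3eq : ∀ x : ℝ, GH bs (1 - x) / (1 - x) = h0 (1 - x) := by
      intro x
      show _ = GHf 0 (1-x) * GH bs (1-x)
      rw [GHf_zero]
      ring
    have hg3 : IntervalIntegrable (fun x => GH bs (1 - x) / (1 - x)) volume 0 1 := by
      have h5 := h0int.comp_sub_left 1
      rw [show (1:ℝ) - 1 = 0 from by norm_num, show (1:ℝ) - 0 = 1 from by norm_num] at h5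
      rw [show (fun x => GH bs (1 - x) / (1 - x)) = fun x => h0 (1 - x) from funext hg3eq]
      exact h5.symm
    have hg2 : IntervalIntegrable (fun x => x ^ n * (GH bs (1 - x) / (1 - x))) volume 0 1 :=
      hg3.continuousOn_mul (continuous_pow n).continuousOn
    have hid : EqOn (fun x : ℝ => (x ^ n - 1) * (GH bs (1 - x) / (1 - x)))
        (fun x : ℝ => x ^ n * (GH bs (1 - x) / (1 - x)) - GH bs (1 - x) / (1 - x))
        (uIcc (0:ℝ) 1) := fun x _ => by ring
    rw [intervalIntegral.integral_congr hid, intervalIntegral.integral_sub hg2 hg3]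
    congr 1
    calc ∫ x in (0:ℝ)..1, GH bs (1-x)/(1-x)
        = ∫ x in (0:ℝ)..1, h0 (1-x) := by simp only [hg3eq]
    _ = GH ((0:ℝ)::bs) 1 := by
        rw [intervalIntegral.integral_comp_sub_left h0 1]
        norm_num [heq0]
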